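/- Jacobi's triple product identity: for |q| < 1 and y ≠ 0, Σ_{n∈ℤ} y^n q^{n^2} = Π_{n≥1} (1 - q^{2n})(1 + y q^{2n-1})(1 + y^{-1} q^{2n-1}). -/

import Mathlib

open Finset Filter Topology

namespace JTP

noncomputable def qf (Q : ℂ) (N : ℕ) : ℂ := ∏ i ∈ Finset.range N, (1 - Q ^ (i + 1))

noncomputable def GB (Q : ℂ) (M k : ℕ) : ℂ :=
  (∏ i ∈ Finset.range k, (1 - Q ^ (M - i))) / qf Q k

lemma one_sub_pow_ne {Q : ℂ} (hQ : ‖Q‖ < 1) {k : ℕ} (hk : k ≠ 0) : 1 - Q ^ k ≠ 0 := by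
  intro h
  have h2 : Q ^ k = 1 := by linear_combination -h
  have : ‖Q ^ k‖ < 1 := by
    rw [norm_pow]; exact pow_lt_one₀ (norm_nonneg _) hQ hk
  rw [h2, norm_one] at this
  exact lt_irrefl _ this

lemma qf_ne_zero {Q : ℂ} (hQ : ‖Q‖ < 1) (N : ℕ) : qf Q N ≠ 0 :=
  Finset.prod_ne_zero_iff.2 fun i _ => one_sub_pow_ne hQ (Nat.succ_ne_zero i)

lemma qf_zero (Q : ℂ) : qf Q 0 = 1 := by simp [qf]

lemma qf_succ (Q : ℂ) (N : ℕ) : qf Q (N + 1) = qf Q N * (1 - Q ^ (N + 1)) := by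
  simp [qf, Finset.prod_range_succ]

lemma GB_num_qf {Q : ℂ} {M k : ℕ} (hk : k ≤ M) :
    (∏ i ∈ Finset.range k, (1 - Q ^ (M - i))) * qf Q (M - k) = qf Q M := by
  have h1 : (∏ i ∈ Finset.range k, (1 - Q ^ (M - i)))
      = ∏ j ∈ Finset.range k, (1 - Q ^ (M - k + j + 1)) := by
    rw [← Finset.prod_range_reflect]
    refine Finset.prod_congr rfl fun j hj => ?_
    rw [Finset.mem_range] at hj
    congr 2
    omega
  rw [h1, qf, qf, mul_comm, ← Finset.prod_range_add, show M - k + k = M by omega]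

lemma GB_eq {Q : ℂ} (hQ : ‖Q‖ < 1) {M k : ℕ} (hk : k ≤ M) :
    GB Q M k = qf Q M / (qf Q k * qf Q (M - k)) := by
  rw [GB, ← GB_num_qf (Q := Q) hk]
  field_simp [qf_ne_zero hQ]

lemma GB_zero {Q : ℂ} {M k : ℕ} (h : M < k) : GB Q M k = 0 := by
  rw [GB, Finset.prod_eq_zero (Finset.mem_range.2 h), zero_div]
  simp

lemma GB_zero' (Q : ℂ) (M : ℕ) : GB Q M 0 = 1 := by simp [GB, qf]

lemma GB_self {Q : ℂ} (hQ : ‖Q‖ < 1) (M : ℕ) : GB Q M M = 1 := by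
  rw [GB_eq hQ le_rfl, Nat.sub_self, qf_zero]
  field_simp [qf_ne_zero hQ]

lemma pascal_aux (Q p F a b : ℂ) (hF : F ≠ 0) (h1 : 1 - a*Q ≠ 0) (h2 : 1 - a*Q^2 ≠ 0) :
    ((1 - a*b*Q^3) * (1 - a*b*Q^2) * p) / (F * (1 - a*Q) * (1 - a*Q^2))
      = (p * (1 - b*Q)) / (F * (1 - a*Q)) * (1 + a*b*Q^2)
        + (p * (1 - b*Q) * (1 - b)) / (F * (1 - a*Q) * (1 - a*Q^2)) * (a*Q^2)
        + p / F * (b*Q) := by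
  have hD1 : F * (1 - a*Q) * (1 - a*Q^2) ≠ 0 := mul_ne_zero (mul_ne_zero hF h1) h2
  have hD2 : F * (1 - a*Q) ≠ 0 := mul_ne_zero hF h1
  have t1 : (p * (1 - b*Q)) / (F * (1 - a*Q)) * (1 + a*b*Q^2)
      = (p * (1 - b*Q) * (1 + a*b*Q^2) * (1 - a*Q^2)) / (F * (1 - a*Q) * (1 - a*Q^2)) := by
    rw [div_mul_eq_mul_div, div_eq_div_iff hD2 hD1]; ring
  have t2 : (p * (1 - b*Q) * (1 - b)) / (F * (1 - a*Q) * (1 - a*Q^2)) * (a*Q^2)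
      = (p * (1 - b*Q) * (1 - b) * (a*Q^2)) / (F * (1 - a*Q) * (1 - a*Q^2)) := by
    rw [div_mul_eq_mul_div]
  have t3 : p / F * (b*Q)
      = (p * (b*Q) * ((1 - a*Q) * (1 - a*Q^2))) / (F * (1 - a*Q) * (1 - a*Q^2)) := by
    rw [div_mul_eq_mul_div, div_eq_div_iff hF hD1]; ring
  rw [t1, t2, t3, ← add_div, ← add_div, div_eq_div_iff hD1 hD1]
  ring

/-- The key double-Pascal identity for Gaussian binomials. -/
lemma pascal {Q : ℂ} (hQ : ‖Q‖ < 1) (j i : ℕ) :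
    GB Q (j + i + 3) (j + 2)
      = GB Q (j + i + 1) (j + 1) * (1 + Q ^ (j + i + 2))
        + GB Q (j + i + 1) (j + 2) * Q ^ (j + 2)
        + GB Q (j + i + 1) j * Q ^ (i + 1) := by
  have hF0 : ∀ x ∈ Finset.range j,
      (1 - Q ^ (j + i + 3 - (x + 1 + 1))) = 1 - Q ^ (j + i + 1 - x) := by
    intro x hx; congr 2; omega
  have h1 : (∏ x ∈ Finset.range (j + 2), (1 - Q ^ (j + i + 3 - x)))
      = (1 - Q ^ (j + i + 3)) * (1 - Q ^ (j + i + 2)) *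
        ∏ x ∈ Finset.range j, (1 - Q ^ (j + i + 1 - x)) := by
    rw [show j + 2 = (j + 1) + 1 from rfl, Finset.prod_range_succ', Finset.prod_range_succ',
      Finset.prod_congr rfl hF0,
      show j + i + 3 - (0 + 1) = j + i + 2 by omega, show j + i + 3 - 0 = j + i + 3 by omega]
    ring
  have h2 : (∏ x ∈ Finset.range (j + 1), (1 - Q ^ (j + i + 1 - x)))
      = (∏ x ∈ Finset.range j, (1 - Q ^ (j + i + 1 - x))) * (1 - Q ^ (i + 1)) := by
    rw [Finset.prod_range_succ, show j + i + 1 - j = i + 1 by omega]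
  have h3 : (∏ x ∈ Finset.range (j + 2), (1 - Q ^ (j + i + 1 - x)))
      = (∏ x ∈ Finset.range j, (1 - Q ^ (j + i + 1 - x))) * (1 - Q ^ (i + 1)) * (1 - Q ^ i) := by
    rw [show j + 2 = (j + 1) + 1 from rfl, Finset.prod_range_succ, h2,
      show j + i + 1 - (j + 1) = i by omega]
  rw [GB, GB, GB, GB, h1, h2, h3, qf_succ, qf_succ]
  have hq1 : qf Q j ≠ 0 := qf_ne_zero hQ j
  have hq2 : (1 : ℂ) - Q ^ j * Q ≠ 0 := by
    have := one_sub_pow_ne hQ (k := j + 1) (by omega); rwa [pow_succ] at this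
  have hq3 : (1 : ℂ) - Q ^ j * Q ^ 2 ≠ 0 := by
    have := one_sub_pow_ne hQ (k := j + 2) (by omega); rwa [pow_add] at this
  have e1 : Q ^ (j + i + 3) = Q ^ j * Q ^ i * Q ^ 3 := by rw [pow_add, pow_add]
  have e2 : Q ^ (j + i + 2) = Q ^ j * Q ^ i * Q ^ 2 := by rw [pow_add, pow_add]
  have e3 : Q ^ (i + 1) = Q ^ i * Q := by rw [pow_succ]
  have e4 : Q ^ (j + 2) = Q ^ j * Q ^ 2 := by rw [pow_add]
  have e5 : Q ^ (j + 1) = Q ^ j * Q := by rw [pow_succ]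
  have e6 : Q ^ (j + 1 + 1) = Q ^ j * Q ^ 2 := by rw [pow_add, pow_add]; ring
  rw [e1, e2, e3, e4, e5]
  exact pascal_aux Q _ _ _ _ hq1 hq2 hq3

/-- ℤ-indexed Gaussian binomial coefficients, centered. -/
noncomputable def gz (Q : ℂ) (N : ℕ) (n : ℤ) : ℂ :=
  if -(N:ℤ) ≤ n then GB Q (2*N) ((n + N).toNat) else 0

lemma gz_pos {Q : ℂ} {N : ℕ} {n : ℤ} (h : -(N:ℤ) ≤ n) :
    gz Q N n = GB Q (2*N) ((n + N).toNat) := if_pos h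

lemma gz_neg {Q : ℂ} {N : ℕ} {n : ℤ} (h : n < -(N:ℤ)) : gz Q N n = 0 := if_neg (by omega)

lemma gz_big {Q : ℂ} {N : ℕ} {n : ℤ} (h : (N:ℤ) < n) : gz Q N n = 0 := by
  rw [gz, if_pos (by omega)]
  exact GB_zero (by omega)

/-- The key recurrence. -/
lemma key {Q : ℂ} (hQ : ‖Q‖ < 1) (N : ℕ) (n : ℤ) :
    gz Q (N+1) n = gz Q N n * (1 + Q ^ (2*N+1))
      + gz Q N (n+1) * Q ^ ((N:ℤ) + 1 + n)
      + gz Q N (n-1) * Q ^ ((N:ℤ) + 1 - n) := by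
  rcases lt_or_ge n (-(N:ℤ)-1) with hA | hA
  · -- all zero
    rw [gz_neg (by push_cast; omega), gz_neg (by omega), gz_neg (by omega), gz_neg (by omega)]
    ring
  rcases eq_or_lt_of_le hA with hB | hB
  · -- n = -N-1
    rw [gz_pos (N := N+1) (n := n) (by push_cast; omega), gz_neg (N := N) (n := n) (by omega),
      gz_pos (N := N) (n := n+1) (by omega), gz_neg (N := N) (n := n-1) (by omega),
      show (n + (N+1:ℕ)).toNat = 0 by push_cast; omega,
      show (n + 1 + (N:ℕ)).toNat = 0 by omega, GB_zero', GB_zero',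
      show (N:ℤ) + 1 + n = 0 by omega]
    simp
  rcases le_or_gt n ((N:ℤ)+1) with hC | hC
  swap
  · -- n ≥ N+2 : all zero
    rw [gz_big (by push_cast; omega), gz_big (by omega), gz_big (by omega), gz_big (by omega)]
    ring
  rcases eq_or_lt_of_le hC with hE | hE
  · -- n = N+1
    rw [gz_pos (by push_cast; omega), gz_pos (by omega), gz_pos (by omega), gz_pos (by omega),
      show (n + (N+1:ℕ)).toNat = 2*(N+1) by push_cast; omega,
      show (n + (N:ℕ)).toNat = 2*N+1 by omega,
      show (n + 1 + (N:ℕ)).toNat = 2*N+2 by omega,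
      show (n - 1 + (N:ℤ)).toNat = 2*N by omega,
      GB_self hQ, GB_zero (by omega), GB_zero (by omega), GB_self hQ,
      show (N:ℤ) + 1 - n = 0 by omega]
    simp
  rcases eq_or_lt_of_le (show -(N:ℤ) ≤ n by omega) with hD | hD
  · -- n = -N : k = 0 boundary case
    rw [gz_pos (by push_cast; omega), gz_pos (by omega), gz_pos (by omega), gz_neg (by omega),
      show (n + (N+1:ℕ)).toNat = 1 by push_cast; omega,
      show (n + (N:ℕ)).toNat = 0 by omega,
      show (n + 1 + (N:ℕ)).toNat = 1 by omega,
      GB_zero',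
      show (N:ℤ) + 1 + n = ((1:ℕ):ℤ) by omega, zpow_natCast]
    rw [show 2*(N+1) = 2*N+1+1 by ring]
    simp only [GB, qf_succ, qf_zero, Finset.prod_range_one, Nat.sub_zero, one_mul, zero_mul,
      add_zero]
    have hq : (1:ℂ) - Q^(0+1) ≠ 0 := one_sub_pow_ne hQ (by omega)
    rw [div_mul_eq_mul_div, add_div' _ _ _ hq, div_eq_div_iff hq hq]
    ring
  · -- main case: -N < n < N+1, i.e. 1 ≤ k = (n+N).toNat ≤ 2N
    obtain ⟨j, hj⟩ : ∃ j : ℕ, n + N = (j:ℤ) + 1 := ⟨(n + N - 1).toNat, by omega⟩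
    obtain ⟨i, hi⟩ : ∃ i : ℕ, 2*N = j + 1 + i := ⟨2*N - j - 1, by omega⟩
    rw [gz_pos (by push_cast; omega), gz_pos (by omega), gz_pos (by omega), gz_pos (by omega),
      show (n + (N+1:ℕ)).toNat = j + 2 by push_cast; omega,
      show (n + (N:ℕ)).toNat = j + 1 by omega,
      show (n + 1 + (N:ℕ)).toNat = j + 2 by omega,
      show (n - 1 + (N:ℤ)).toNat = j by omega,
      show (N:ℤ) + 1 + n = ((j+2:ℕ):ℤ) by omega, zpow_natCast,
      show (N:ℤ) + 1 - n = ((i+1:ℕ):ℤ) by omega, zpow_natCast,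
      show 2*(N+1) = j + i + 3 by omega,
      show 2*N+1 = j + i + 2 by omega,
      show 2*N = j + i + 1 by omega]
    exact pascal hQ j i

section Bounds

variable {Q : ℂ} (hQ : ‖Q‖ < 1)

lemma exp_le_one_sub {x : ℝ} (h0 : 0 ≤ x) (h2 : x ≤ 1/2) : Real.exp (-(2*x)) ≤ 1 - x := by
  have h1 : 1 + 2*x ≤ Real.exp (2*x) := by
    have := Real.add_one_le_exp (2*x); linarith
  have h3 : Real.exp (-(2*x)) = (Real.exp (2*x))⁻¹ := by
    rw [Real.exp_neg]
  rw [h3]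
  have h4 : (Real.exp (2*x))⁻¹ ≤ (1 + 2*x)⁻¹ := by
    apply inv_anti₀ (by linarith) h1
  refine h4.trans ?_
  rw [inv_le_iff_one_le_mul₀ (by linarith)]
  nlinarith

include hQ

lemma geo_tail_le (K N : ℕ) :
    ∑ i ∈ Finset.range N, ‖Q‖^(K+i+1) ≤ ‖Q‖/(1-‖Q‖) := by
  have ht0 : (0:ℝ) ≤ ‖Q‖ := norm_nonneg _
  have step : ∀ i ∈ Finset.range N, ‖Q‖^(K+i+1) ≤ ‖Q‖ * ‖Q‖^i := by
    intro i _
    rw [show K+i+1 = K + (1+i) by ring, pow_add, pow_add, pow_one]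
    have h1 : ‖Q‖^K ≤ 1 := pow_le_one₀ ht0 hQ.le
    exact mul_le_of_le_one_left (by positivity) h1
  refine (Finset.sum_le_sum step).trans ?_
  rw [← Finset.mul_sum]
  have hsum : ∑ i ∈ Finset.range N, ‖Q‖^i ≤ (1-‖Q‖)⁻¹ := by
    refine (Summable.sum_le_tsum _ (fun i _ => pow_nonneg ht0 i) (summable_geometric_of_lt_one ht0 hQ)).trans ?_
    rw [tsum_geometric_of_lt_one ht0 hQ]
  rw [div_eq_mul_inv]
  exact mul_le_mul_of_nonneg_left hsum ht0

lemma qf_norm_le (N : ℕ) : ‖qf Q N‖ ≤ Real.exp (‖Q‖/(1-‖Q‖)) := by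
  have ht0 : (0:ℝ) ≤ ‖Q‖ := norm_nonneg _
  rw [qf, norm_prod]
  have h1 : ∀ i ∈ Finset.range N, ‖1 - Q^(i+1)‖ ≤ Real.exp (‖Q‖^(i+1)) := by
    intro i _
    refine le_trans (norm_sub_le _ _) ?_
    rw [norm_one, norm_pow]
    have := Real.add_one_le_exp (‖Q‖^(i+1))
    linarith
  refine (Finset.prod_le_prod (fun i _ => norm_nonneg _) h1).trans ?_
  rw [← Real.exp_sum]
  apply Real.exp_le_exp.2
  have := geo_tail_le hQ 0 N
  simpa only [zero_add] using this

/-- `K` with `‖Q‖^K < 1/2` exists. -/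
lemma exists_K : ∃ K : ℕ, ‖Q‖^K < 1/2 :=
  exists_pow_lt_of_lt_one (by norm_num) hQ

lemma qf_norm_ge (K : ℕ) (hK : ‖Q‖^K < 1/2) (N : ℕ) :
    (∏ i ∈ Finset.range K, (1 - ‖Q‖^(i+1))) * Real.exp (-(2*(‖Q‖/(1-‖Q‖))))
      ≤ ‖qf Q N‖ := by
  have ht0 : (0:ℝ) ≤ ‖Q‖ := norm_nonneg _
  have hfac : ∀ i : ℕ, 0 < 1 - ‖Q‖^(i+1) := by
    intro i
    have : ‖Q‖^(i+1) < 1 := pow_lt_one₀ ht0 hQ (by omega)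
    linarith
  have hfle : ∀ i : ℕ, 1 - ‖Q‖^(i+1) ≤ 1 := by
    intro i; have := pow_nonneg ht0 (i+1); linarith
  have hp : ∀ M : ℕ, (∏ i ∈ Finset.range M, (1 - ‖Q‖^(i+1))) ≤ ‖qf Q M‖ := by
    intro M
    rw [qf, norm_prod]
    refine Finset.prod_le_prod (fun i _ => (hfac i).le) (fun i _ => ?_)
    have h := norm_sub_norm_le (1 : ℂ) (Q^(i+1))
    rw [norm_one, norm_pow] at h
    linarith
  refine le_trans ?_ (hp N)
  rcases le_or_gt N K with h | h
  · -- N ≤ K : p K ≤ p N, and exp factor ≤ 1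
    have h1 : (∏ i ∈ Finset.range K, (1 - ‖Q‖^(i+1))) ≤ ∏ i ∈ Finset.range N, (1 - ‖Q‖^(i+1)) := by
      rw [show K = N + (K - N) by omega, Finset.prod_range_add]
      have h2 : (∏ i ∈ Finset.range (K-N), (1 - ‖Q‖^(N+i+1))) ≤ 1 :=
        Finset.prod_le_one (fun i _ => by
          have : ‖Q‖^(N+i+1) < 1 := pow_lt_one₀ ht0 hQ (by omega)
          linarith) (fun i _ => by
          have := pow_nonneg ht0 (N+i+1); linarith)
      have h3 : 0 ≤ ∏ i ∈ Finset.range N, (1 - ‖Q‖^(i+1)) :=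
        Finset.prod_nonneg (fun i _ => (hfac i).le)
      exact mul_le_of_le_one_right h3 h2
    have h4 : Real.exp (-(2*(‖Q‖/(1-‖Q‖)))) ≤ 1 := by
      rw [Real.exp_le_one_iff]
      have : 0 ≤ ‖Q‖/(1-‖Q‖) := div_nonneg ht0 (by linarith)
      linarith
    have h5 : 0 ≤ ∏ i ∈ Finset.range K, (1 - ‖Q‖^(i+1)) :=
      Finset.prod_nonneg (fun i _ => (hfac i).le)
    nlinarith [Finset.prod_nonneg (fun i (_ : i ∈ Finset.range N) => (hfac i).le)]
  · -- K < N
    rw [show N = K + (N - K) by omega, Finset.prod_range_add]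
    have h6 : Real.exp (-(2*(‖Q‖/(1-‖Q‖)))) ≤ ∏ i ∈ Finset.range (N-K), (1 - ‖Q‖^(K+(i+1))) := by
      have hstep : ∀ i ∈ Finset.range (N-K), Real.exp (-(2*‖Q‖^(K+i+1))) ≤ 1 - ‖Q‖^(K+i+1) := by
        intro i _
        apply exp_le_one_sub (pow_nonneg ht0 _)
        calc ‖Q‖^(K+i+1) ≤ ‖Q‖^K := pow_le_pow_of_le_one ht0 hQ.le (by omega)
          _ ≤ 1/2 := hK.le
      calc Real.exp (-(2*(‖Q‖/(1-‖Q‖))))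
          ≤ Real.exp (-(2* ∑ i ∈ Finset.range (N-K), ‖Q‖^(K+i+1))) := by
            apply Real.exp_le_exp.2
            have := geo_tail_le hQ K (N-K)
            linarith
        _ = ∏ i ∈ Finset.range (N-K), Real.exp (-(2*‖Q‖^(K+i+1))) := by
            rw [← Real.exp_sum]
            congr 1
            rw [Finset.mul_sum, ← Finset.sum_neg_distrib]
        _ ≤ _ := Finset.prod_le_prod (fun i _ => (Real.exp_pos _).le) hstep
    apply mul_le_mul_of_nonneg_left h6
    exact Finset.prod_nonneg (fun i _ => (hfac i).le)

end Bounds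
section Limits

variable {Q : ℂ} (hQ : ‖Q‖ < 1)

include hQ

/-- A uniform positive lower bound for `‖qf Q N‖`. -/
lemma exists_lb : ∃ c : ℝ, 0 < c ∧ ∀ N, c ≤ ‖qf Q N‖ := by
  obtain ⟨K, hK⟩ := exists_K hQ
  refine ⟨(∏ i ∈ Finset.range K, (1 - ‖Q‖^(i+1))) * Real.exp (-(2*(‖Q‖/(1-‖Q‖)))), ?_,
    fun N => qf_norm_ge hQ K hK N⟩
  apply mul_pos _ (Real.exp_pos _)
  apply Finset.prod_pos
  intro i _
  have : ‖Q‖^(i+1) < 1 := pow_lt_one₀ (norm_nonneg _) hQ (by omega)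
  linarith

lemma GB_bound {c : ℝ} (hc : 0 < c) (hcb : ∀ N, c ≤ ‖qf Q N‖) (M k : ℕ) :
    ‖GB Q M k‖ ≤ Real.exp (‖Q‖/(1-‖Q‖)) / (c * c) := by
  rcases le_or_gt k M with h | h
  · rw [GB_eq hQ h, norm_div, norm_mul]
    apply div_le_div₀ (Real.exp_pos _).le (qf_norm_le hQ M) (by positivity)
    have h1 := hcb k
    have h2 := hcb (M - k)
    nlinarith [norm_nonneg (qf Q k), norm_nonneg (qf Q (M-k))]
  · rw [GB_zero h, norm_zero]
    positivity

/-- `qf Q N` converges to the infinite product. -/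
lemma qf_tendsto : ∃ P : ℂ, P ≠ 0 ∧ Tendsto (fun N => qf Q N) atTop (𝓝 P) := by
  obtain ⟨c, hc, hcb⟩ := exists_lb hQ
  obtain ⟨K, hK⟩ := exists_K hQ
  have hne : ∀ i : ℕ, (1 : ℂ) - Q^(i+1) ≠ 0 := fun i => one_sub_pow_ne hQ (by omega)
  have hlog : Summable (fun i : ℕ => Complex.log (1 - Q^(i+1))) := by
    rw [← summable_nat_add_iff K]
    have hbound : ∀ n : ℕ, ‖Complex.log (1 - Q^(n+K+1))‖ ≤ (3/2) * ‖Q‖^n := by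
      intro n
      have hsm : ‖-Q^(n+K+1)‖ ≤ 1/2 := by
        rw [norm_neg, norm_pow]
        calc ‖Q‖^(n+K+1) ≤ ‖Q‖^K := pow_le_pow_of_le_one (norm_nonneg _) hQ.le (by omega)
          _ ≤ 1/2 := hK.le
      have := Complex.norm_log_one_add_half_le_self hsm
      rw [show (1 : ℂ) + -Q^(n+K+1) = 1 - Q^(n+K+1) by ring] at this
      refine this.trans ?_
      rw [norm_neg, norm_pow]
      have h1 : ‖Q‖^(n+K+1) ≤ ‖Q‖^n := pow_le_pow_of_le_one (norm_nonneg _) hQ.le (by omega)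
      nlinarith
    exact Summable.of_norm_bounded
      ((summable_geometric_of_lt_one (norm_nonneg _) hQ).mul_left (3/2)) hbound
  have hmul : Multipliable (fun i : ℕ => 1 - Q^(i+1)) := by
    have := Complex.multipliable_of_summable_log hlog
    exact this
  refine ⟨∏' i : ℕ, (1 - Q^(i+1)), ?_, ?_⟩
  · have hT : Tendsto (fun N => ‖qf Q N‖) atTop (𝓝 ‖∏' i : ℕ, (1 - Q^(i+1))‖) :=
      (hmul.hasProd.tendsto_prod_nat).norm
    have hge : c ≤ ‖∏' i : ℕ, (1 - Q^(i+1))‖ :=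
      ge_of_tendsto hT (Eventually.of_forall hcb)
    intro h0
    rw [h0, norm_zero] at hge
    linarith
  · exact hmul.hasProd.tendsto_prod_nat

/-- Pointwise limit of the coefficients. -/
lemma gz_tendsto {P : ℂ} (hP : P ≠ 0) (hT : Tendsto (fun N => qf Q N) atTop (𝓝 P)) (n : ℤ) :
    Tendsto (fun N => gz Q N n) atTop (𝓝 P⁻¹) := by
  have h2 : Tendsto (fun N : ℕ => 2*N) atTop atTop :=
    tendsto_atTop_atTop.2 fun b => ⟨b, fun a ha => by omega⟩
  have ha : Tendsto (fun N : ℕ => ((n : ℤ) + N).toNat) atTop atTop := by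
    rw [tendsto_atTop_atTop]
    intro b
    exact ⟨b + n.natAbs, fun a hab => by omega⟩
  have hb : Tendsto (fun N : ℕ => 2*N - ((n : ℤ) + N).toNat) atTop atTop := by
    rw [tendsto_atTop_atTop]
    intro b
    exact ⟨b + n.natAbs, fun a hab => by omega⟩
  have hlim : Tendsto (fun N => qf Q (2*N) / (qf Q (((n : ℤ) + N).toNat)
      * qf Q (2*N - ((n : ℤ) + N).toNat))) atTop (𝓝 (P / (P * P))) :=
    Tendsto.div (hT.comp h2) ((hT.comp ha).mul (hT.comp hb)) (mul_ne_zero hP hP)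
  have heq : P / (P * P) = P⁻¹ := by
    field_simp
  rw [heq] at hlim
  apply hlim.congr'
  filter_upwards [eventually_ge_atTop n.natAbs] with N hN
  rw [gz_pos (by omega), GB_eq hQ (by omega)]

end Limits
section MainId

variable {q y : ℂ}

lemma hQz (hq0 : q ≠ 0) (k : ℤ) : (q^2 : ℂ)^(k : ℤ) = q^(2*k) := by
  rw [← zpow_natCast q 2, ← zpow_mul]
  norm_num

lemma main_id (hq : ‖q‖ < 1) (hq0 : q ≠ 0) (hy : y ≠ 0) (N : ℕ) :
    ∏ j ∈ Finset.range N, ((1 + y * q^(2*j+1)) * (1 + y⁻¹ * q^(2*j+1)))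
      = ∑ n ∈ Finset.Icc (-(N:ℤ)) (N:ℤ), gz (q^2) N n * (y ^ n * q ^ (n^2)) := by
  have hQ : ‖q^2‖ < 1 := by
    rw [norm_pow]
    exact pow_lt_one₀ (norm_nonneg _) hq (by omega)
  induction N with
  | zero => simp [gz, GB_zero']
  | succ N ih =>
    rw [Finset.prod_range_succ, ih, show ((N+1 : ℕ) : ℤ) = (N:ℤ)+1 by push_cast; ring]
    have hsplit : ∀ n ∈ Finset.Icc (-((N:ℤ)+1)) ((N:ℤ)+1),
        gz (q^2) (N+1) n * (y ^ n * q ^ (n^2))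
          = gz (q^2) N n * (1 + (q^2) ^ (2*N+1)) * (y ^ n * q ^ (n^2))
            + gz (q^2) N (n+1) * (q^2) ^ ((N:ℤ) + 1 + n) * (y ^ n * q ^ (n^2))
            + gz (q^2) N (n-1) * (q^2) ^ ((N:ℤ) + 1 - n) * (y ^ n * q ^ (n^2)) := by
      intro n _
      rw [key hQ N n]
      ring
    have hqq2 : ∀ m : ℤ, q^(2*((N:ℤ)+m)) * q^((m + -1)^2) = q^(m^2) * q^(2*(N:ℤ)+1) := by
      intro m
      rw [← zpow_add₀ hq0, ← zpow_add₀ hq0]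
      congr 1
      ring
    have hqq3 : ∀ m : ℤ, q^(2*((N:ℤ)-m)) * q^((m + 1)^2) = q^(m^2) * q^(2*(N:ℤ)+1) := by
      intro m
      rw [← zpow_add₀ hq0, ← zpow_add₀ hq0]
      congr 1
      ring
    have hnat : (q:ℂ)^(2*N+1 : ℕ) = q^(2*(N:ℤ)+1) := by
      rw [← zpow_natCast]
      push_cast
      ring_nf
    have hS1 : ∑ n ∈ Finset.Icc (-((N:ℤ)+1)) ((N:ℤ)+1),
        gz (q^2) N n * (1 + (q^2) ^ (2*N+1)) * (y ^ n * q ^ (n^2))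
        = (∑ n ∈ Finset.Icc (-(N:ℤ)) (N:ℤ), gz (q^2) N n * (y ^ n * q ^ (n^2)))
            * (1 + (q^2) ^ (2*N+1)) := by
      rw [← Finset.sum_subset (Finset.Icc_subset_Icc (by omega) (by omega) :
            Finset.Icc (-(N:ℤ)) (N:ℤ) ⊆ Finset.Icc (-((N:ℤ)+1)) ((N:ℤ)+1))]
      · rw [Finset.sum_mul]
        exact Finset.sum_congr rfl fun n _ => by ring
      · intro n hn hn2
        simp only [Finset.mem_Icc] at hn hn2
        rcases lt_or_ge n (-(N:ℤ)) with h | h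
        · rw [gz_neg h]; ring
        · rw [gz_big (by omega)]; ring
    have hS2 : ∑ n ∈ Finset.Icc (-((N:ℤ)+1)) ((N:ℤ)+1),
        gz (q^2) N (n+1) * (q^2) ^ ((N:ℤ) + 1 + n) * (y ^ n * q ^ (n^2))
        = (∑ n ∈ Finset.Icc (-(N:ℤ)) (N:ℤ), gz (q^2) N n * (y ^ n * q ^ (n^2)))
            * (y⁻¹ * q^(2*N+1)) := by
      rw [← Finset.sum_subset (Finset.Icc_subset_Icc (by omega) (by omega) :
            Finset.Icc (-(N:ℤ) + -1) ((N:ℤ) + -1) ⊆ Finset.Icc (-((N:ℤ)+1)) ((N:ℤ)+1))]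
      · rw [← Finset.map_add_right_Icc (-(N:ℤ)) (N:ℤ) (-1), Finset.sum_map, Finset.sum_mul]
        refine Finset.sum_congr rfl fun m hm => ?_
        simp only [addRightEmbedding_apply]
        rw [show m + -1 + 1 = m by ring,
          show (N:ℤ) + 1 + (m + -1) = (N:ℤ) + m by ring, hQz hq0,
          show (y:ℂ)^(m + -1) = y^m * y⁻¹ by rw [zpow_add₀ hy, zpow_neg_one],
          hnat]
        linear_combination (gz (q^2) N m * y^m * y⁻¹) * hqq2 m
      · intro n hn hn2
        simp only [Finset.mem_Icc] at hn hn2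
        rw [gz_big (show (N:ℤ) < n + 1 by omega)]
        ring
    have hS3 : ∑ n ∈ Finset.Icc (-((N:ℤ)+1)) ((N:ℤ)+1),
        gz (q^2) N (n-1) * (q^2) ^ ((N:ℤ) + 1 - n) * (y ^ n * q ^ (n^2))
        = (∑ n ∈ Finset.Icc (-(N:ℤ)) (N:ℤ), gz (q^2) N n * (y ^ n * q ^ (n^2)))
            * (y * q^(2*N+1)) := by
      rw [← Finset.sum_subset (Finset.Icc_subset_Icc (by omega) (by omega) :
            Finset.Icc (-(N:ℤ) + 1) ((N:ℤ) + 1) ⊆ Finset.Icc (-((N:ℤ)+1)) ((N:ℤ)+1))]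
      · rw [← Finset.map_add_right_Icc (-(N:ℤ)) (N:ℤ) 1, Finset.sum_map, Finset.sum_mul]
        refine Finset.sum_congr rfl fun m hm => ?_
        simp only [addRightEmbedding_apply]
        rw [show m + 1 - 1 = m by ring,
          show (N:ℤ) + 1 - (m + 1) = (N:ℤ) - m by ring, hQz hq0,
          show (2:ℤ) * ((N:ℤ) - m) = 2*((N:ℤ)-m) from rfl,
          show (y:ℂ)^(m + 1) = y^m * y by rw [zpow_add₀ hy, zpow_one],
          hnat]
        linear_combination (gz (q^2) N m * y^m * y) * hqq3 m
      · intro n hn hn2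
        simp only [Finset.mem_Icc] at hn hn2
        rw [gz_neg (show n - 1 < -(N:ℤ) by omega)]
        ring
    rw [Finset.sum_congr rfl hsplit, Finset.sum_add_distrib, Finset.sum_add_distrib,
      hS1, hS2, hS3]
    have hyy : y * y⁻¹ = 1 := mul_inv_cancel₀ hy
    have h1 : ((q:ℂ)^2)^(2*N+1) = q^(2*N+1) * q^(2*N+1) := by
      rw [← pow_add, ← pow_mul]
      ring_nf
    linear_combination (∑ n ∈ Finset.Icc (-(N:ℤ)) (N:ℤ), gz (q^2) N n * (y ^ n * q ^ (n^2)))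
      * (q^(2*N+1) * q^(2*N+1)) * hyy
      + (∑ n ∈ Finset.Icc (-(N:ℤ)) (N:ℤ), gz (q^2) N n * (y ^ n * q ^ (n^2))) * h1

end MainId
section Final

lemma sum_aux {q : ℂ} (hq : ‖q‖ < 1) (z : ℂ) :
    Summable (fun m : ℕ => ‖z‖^m * ‖q‖^(m^2)) := by
  have h0 : Tendsto (fun m : ℕ => ‖z‖ * ‖q‖^m) atTop (𝓝 0) := by
    have := (tendsto_pow_atTop_nhds_zero_of_lt_one (norm_nonneg q) hq).const_mul ‖z‖
    simpa using this
  have hev : ∀ᶠ m in atTop, ‖z‖ * ‖q‖^m ≤ 1/2 :=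
    h0.eventually_le_const (by norm_num)
  obtain ⟨N₀, hN₀⟩ := eventually_atTop.1 hev
  rw [← summable_nat_add_iff N₀]
  refine Summable.of_nonneg_of_le (fun m => by positivity) (fun m => ?_)
    (summable_geometric_of_lt_one (by norm_num) (by norm_num) : Summable fun m => (1/2:ℝ)^m)
  have key : ‖z‖^(m+N₀) * ‖q‖^((m+N₀)^2) = (‖z‖ * ‖q‖^(m+N₀))^(m+N₀) := by
    rw [mul_pow, pow_right_comm]
    congr 1
    rw [← pow_mul, sq]
  rw [key]
  calc (‖z‖ * ‖q‖^(m+N₀))^(m+N₀) ≤ (1/2)^(m+N₀) := by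
        apply pow_le_pow_left₀ (by positivity) (hN₀ (m+N₀) (by omega))
    _ ≤ (1/2)^m := pow_le_pow_of_le_one (by norm_num) (by norm_num) (by omega)

lemma theta_summable {q y : ℂ} (hq : ‖q‖ < 1) (hy : y ≠ 0) :
    Summable (fun n : ℤ => ‖y ^ n * q ^ (n^2)‖) := by
  apply Summable.of_nat_of_neg
  · apply (sum_aux hq y).congr
    intro m
    rw [norm_mul, show ((m:ℤ))^2 = ((m^2 : ℕ) : ℤ) by push_cast; ring, zpow_natCast,
      zpow_natCast, norm_pow, norm_pow]
  · apply (sum_aux hq y⁻¹).congr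
    intro m
    rw [norm_mul, show (-(m:ℤ))^2 = ((m^2 : ℕ) : ℤ) by push_cast; ring, zpow_natCast,
      norm_pow, zpow_neg, zpow_natCast]
    congr 1
    rw [norm_inv, norm_inv, norm_pow, inv_pow]

lemma prod3_sub_one {x y z : ℂ} {s : ℝ} (hs1 : s ≤ 1) (hx : ‖x‖ ≤ s) (hy : ‖y‖ ≤ s)
    (hz : ‖z‖ ≤ s) : ‖(1-x)*(1+y)*(1+z) - 1‖ ≤ 7*s := by
  have hs0 : 0 ≤ s := le_trans (norm_nonneg x) hx
  have h : (1-x)*(1+y)*(1+z) - 1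
      = y + z + y*z + (-x) + (-(x*y)) + (-(x*z)) + (-(x*y*z)) := by ring
  rw [h]
  have tri : ‖y + z + y*z + (-x) + (-(x*y)) + (-(x*z)) + (-(x*y*z))‖
      ≤ ‖y‖ + ‖z‖ + ‖y*z‖ + ‖x‖ + ‖x*y‖ + ‖x*z‖ + ‖x*y*z‖ := by
    refine (norm_add_le _ _).trans (add_le_add ?_ (le_of_eq (norm_neg _)))
    refine (norm_add_le _ _).trans (add_le_add ?_ (le_of_eq (norm_neg _)))
    refine (norm_add_le _ _).trans (add_le_add ?_ (le_of_eq (norm_neg _)))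
    refine (norm_add_le _ _).trans (add_le_add ?_ (le_of_eq (norm_neg _)))
    refine (norm_add_le _ _).trans (add_le_add ?_ le_rfl)
    exact norm_add_le _ _
  refine tri.trans ?_
  rw [norm_mul, norm_mul, norm_mul, norm_mul, norm_mul]
  nlinarith [norm_nonneg x, norm_nonneg y, norm_nonneg z, mul_le_mul hx hy (norm_nonneg y) hs0,
    mul_le_mul hx hz (norm_nonneg z) hs0, mul_le_mul hy hz (norm_nonneg z) hs0,
    mul_le_mul (mul_le_mul hx hy (norm_nonneg y) hs0) hz (norm_nonneg z) (by nlinarith)]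

end Final

end JTP

open JTP in
/-- Jacobi's triple product identity: for complex `q` with `|q| < 1` and `y ≠ 0`,
`Σ_{n∈ℤ} yⁿ q^{n²} = ∏_{n ≥ 1} (1 - q^{2n})(1 + y q^{2n-1})(1 + y⁻¹ q^{2n-1})`. -/
theorem jacobi_triple_product (q y : ℂ) (hq : ‖q‖ < 1) (hy : y ≠ 0) :
    ∑' n : ℤ, y ^ n * q ^ (n ^ 2).toNat =
      ∏' n : ℕ, ((1 - q ^ (2 * (n + 1))) * (1 + y * q ^ (2 * (n + 1) - 1)) *
        (1 + y⁻¹ * q ^ (2 * (n + 1) - 1))) := by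
  by_cases hq0 : q = 0
  · subst hq0
    have hL : ∑' n : ℤ, y ^ n * (0:ℂ) ^ (n ^ 2).toNat = 1 := by
      rw [tsum_eq_single (0 : ℤ)]
      · norm_num
      · intro n hn
        have h1 : (0:ℤ) < n^2 := by positivity
        rw [zero_pow (show (n^2).toNat ≠ 0 by omega), mul_zero]
    rw [hL]
    have hR : ∀ n : ℕ, (1 - (0:ℂ)^(2*(n+1))) * (1 + y*(0:ℂ)^(2*(n+1)-1))
        * (1 + y⁻¹*(0:ℂ)^(2*(n+1)-1)) = 1 := by
      intro n
      rw [zero_pow (by omega), zero_pow (by omega)]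
      ring
    rw [tprod_congr hR, tprod_one]
  -- main case
  have hQ : ‖q^2‖ < 1 := by
    rw [norm_pow]
    exact pow_lt_one₀ (norm_nonneg _) hq (by omega)
  obtain ⟨P, hPne, hPT⟩ := qf_tendsto hQ
  obtain ⟨c, hc, hcb⟩ := exists_lb hQ
  set Cb : ℝ := Real.exp (‖q^2‖/(1-‖q^2‖)) / (c * c) with hCb
  have hCb0 : 0 ≤ Cb := by positivity
  have hv : Summable (fun n : ℤ => ‖y ^ n * q ^ (n^2)‖) := theta_summable hq hy
  -- dominated convergence
  have hDC : Tendsto (fun N => ∑' n : ℤ, gz (q^2) N n * (y ^ n * q ^ (n^2))) atTop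
      (𝓝 (∑' n : ℤ, P⁻¹ * (y ^ n * q ^ (n^2)))) := by
    apply tendsto_tsum_of_dominated_convergence (bound := fun n => Cb * ‖y ^ n * q ^ (n^2)‖)
      (hv.mul_left Cb) (fun n => (gz_tendsto hQ hPne hPT n).mul_const _)
    apply Eventually.of_forall
    intro N n
    rw [norm_mul]
    apply mul_le_mul_of_nonneg_right _ (norm_nonneg _)
    by_cases h : -(N:ℤ) ≤ n
    · rw [gz, if_pos h]
      exact GB_bound hQ hc hcb _ _
    · rw [gz, if_neg h, norm_zero]
      exact hCb0
  rw [tsum_mul_left] at hDC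
  have hts : ∀ N : ℕ, (∑' n : ℤ, gz (q^2) N n * (y ^ n * q ^ (n^2)))
      = ∑ n ∈ Finset.Icc (-(N:ℤ)) (N:ℤ), gz (q^2) N n * (y ^ n * q ^ (n^2)) := by
    intro N
    apply tsum_eq_sum
    intro n hn
    rw [Finset.mem_Icc] at hn
    rcases lt_or_ge n (-(N:ℤ)) with h | h
    · rw [gz_neg h, zero_mul]
    · rw [gz_big (by omega), zero_mul]
  set S : ℂ := ∑' n : ℤ, y ^ n * q ^ (n^2) with hS
  have hT : Tendsto (fun N => ∏ j ∈ Finset.range N, ((1 + y * q^(2*j+1)) * (1 + y⁻¹ * q^(2*j+1))))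
      atTop (𝓝 (P⁻¹ * S)) := by
    apply hDC.congr
    intro N
    rw [hts, ← main_id hq hq0 hy N]
  have hqfT : Tendsto (fun N => qf (q^2) N *
      ∏ j ∈ Finset.range N, ((1 + y * q^(2*j+1)) * (1 + y⁻¹ * q^(2*j+1)))) atTop (𝓝 S) := by
    have := hPT.mul hT
    rwa [← mul_assoc, mul_inv_cancel₀ hPne, one_mul] at this
  set f : ℕ → ℂ := fun n => (1 - q ^ (2 * (n + 1))) * (1 + y * q ^ (2 * (n + 1) - 1)) *
      (1 + y⁻¹ * q ^ (2 * (n + 1) - 1)) with hf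
  have hprod_eq : ∀ N, ∏ j ∈ Finset.range N, f j
      = qf (q^2) N * ∏ j ∈ Finset.range N, ((1 + y * q^(2*j+1)) * (1 + y⁻¹ * q^(2*j+1))) := by
    intro N
    rw [qf, ← Finset.prod_mul_distrib]
    refine Finset.prod_congr rfl fun j _ => ?_
    simp only [hf]
    rw [show 2*(j+1)-1 = 2*j+1 by omega, ← pow_mul]
    ring
  have hfT : Tendsto (fun N => ∏ j ∈ Finset.range N, f j) atTop (𝓝 S) :=
    hqfT.congr (fun N => (hprod_eq N).symm)
  -- the left side of the goal equals S
  have hLS : ∑' n : ℤ, y ^ n * q ^ (n ^ 2).toNat = S := by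
    apply tsum_congr
    intro n
    rw [← zpow_natCast q ((n^2).toNat), Int.toNat_of_nonneg (sq_nonneg n)]
  rw [hLS]
  -- now show S = ∏' f
  by_cases hzero : ∃ n₀, f n₀ = 0
  · obtain ⟨n₀, h0⟩ := hzero
    have hHP : HasProd f 0 := by
      rw [HasProd]
      apply Tendsto.congr' _ tendsto_const_nhds
      filter_upwards [eventually_ge_atTop ({n₀} : Finset ℕ)] with s hs
      exact (Finset.prod_eq_zero (hs (Finset.mem_singleton_self n₀)) h0).symm
    have hS0 : Tendsto (fun N => ∏ j ∈ Finset.range N, f j) atTop (𝓝 0) := by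
      apply Tendsto.congr' _ tendsto_const_nhds
      filter_upwards [eventually_ge_atTop (n₀+1)] with N hN
      exact (Finset.prod_eq_zero (Finset.mem_range.2 (by omega)) h0).symm
    rw [tendsto_nhds_unique hfT hS0, hHP.tprod_eq]
  · push_neg at hzero
    -- Multipliable f via summable logs
    obtain ⟨R, hR1, hy1, hy2⟩ : ∃ R : ℝ, 1 ≤ R ∧ ‖y‖ ≤ R ∧ ‖y⁻¹‖ ≤ R := by
      refine ⟨max ‖y‖ ‖y⁻¹‖ + 1, ?_, ?_, ?_⟩
      · have : (0:ℝ) ≤ max ‖y‖ ‖y⁻¹‖ := le_trans (norm_nonneg y) (le_max_left _ _)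
        linarith
      · have := le_max_left ‖y‖ ‖y⁻¹‖; linarith
      · have := le_max_right ‖y‖ ‖y⁻¹‖; linarith
    have hwb : ∀ j : ℕ, R * ‖q‖^j ≤ 1 → ‖f j - 1‖ ≤ 7 * (R * ‖q‖^j) := by
      intro j hj
      have hq0' : (0:ℝ) ≤ ‖q‖ := norm_nonneg _
      have hqj : ‖q‖^j ≤ 1 := pow_le_one₀ hq0' hq.le
      have ha : ‖q ^ (2*(j+1))‖ ≤ R * ‖q‖^j := by
        rw [norm_pow]
        calc ‖q‖^(2*(j+1)) ≤ ‖q‖^j := pow_le_pow_of_le_one hq0' hq.le (by omega)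
          _ = 1 * ‖q‖^j := (one_mul _).symm
          _ ≤ R * ‖q‖^j := by
              apply mul_le_mul_of_nonneg_right hR1 (by positivity)
      have hb : ‖y * q ^ (2*(j+1)-1)‖ ≤ R * ‖q‖^j := by
        rw [norm_mul, norm_pow]
        have h1 : ‖q‖^(2*(j+1)-1) ≤ ‖q‖^j := pow_le_pow_of_le_one hq0' hq.le (by omega)
        apply mul_le_mul hy1 h1 (by positivity) (by linarith)
      have hc' : ‖y⁻¹ * q ^ (2*(j+1)-1)‖ ≤ R * ‖q‖^j := by
        rw [norm_mul, norm_pow]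
        have h1 : ‖q‖^(2*(j+1)-1) ≤ ‖q‖^j := pow_le_pow_of_le_one hq0' hq.le (by omega)
        apply mul_le_mul hy2 h1 (by positivity) (by linarith)
      have := prod3_sub_one hj ha hb hc'
      exact this
    have hev : ∀ᶠ j in atTop, R * ‖q‖^j ≤ 1/14 := by
      have h0 : Tendsto (fun j : ℕ => R * ‖q‖^j) atTop (𝓝 0) := by
        have := (tendsto_pow_atTop_nhds_zero_of_lt_one (norm_nonneg q) hq).const_mul R
        simpa using this
      exact h0.eventually_le_const (by norm_num)
    obtain ⟨J, hJ⟩ := eventually_atTop.1 hev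
    have hlog : Summable (fun j : ℕ => Complex.log (f j)) := by
      rw [← summable_nat_add_iff J]
      have hb2 : ∀ j : ℕ, ‖Complex.log (f (j+J))‖ ≤ ((21/2)*R) * ‖q‖^j := by
        intro j
        have hs : R * ‖q‖^(j+J) ≤ 1/14 := by
          refine le_trans ?_ (hJ J le_rfl)
          apply mul_le_mul_of_nonneg_left _ (by linarith)
          exact pow_le_pow_of_le_one (norm_nonneg _) hq.le (by omega)
        have hw : ‖f (j+J) - 1‖ ≤ 7 * (R * ‖q‖^(j+J)) := hwb _ (le_trans hs (by norm_num))
        have hw2 : ‖f (j+J) - 1‖ ≤ 1/2 := by linarith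
        have := Complex.norm_log_one_add_half_le_self (z := f (j+J) - 1) hw2
        rw [show (1:ℂ) + (f (j+J) - 1) = f (j+J) by ring] at this
        refine this.trans ?_
        have h3 : ‖q‖^(j+J) ≤ ‖q‖^j := pow_le_pow_of_le_one (norm_nonneg _) hq.le (by omega)
        have h4 : R * ‖q‖^(j+J) ≤ R * ‖q‖^j :=
          mul_le_mul_of_nonneg_left h3 (by linarith)
        nlinarith [this, hw, h4]
      exact Summable.of_norm_bounded
        ((summable_geometric_of_lt_one (norm_nonneg _) hq).mul_left ((21/2)*R)) hb2
    have hmul : Multipliable f := by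
      have := Complex.multipliable_of_summable_log hlog
      exact this
    exact tendsto_nhds_unique hfT hmul.hasProd.tendsto_prod_nat
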